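/- Let X be a metric space with an upper curvature bound. If for every x ∈ X there exist arbitrarily small r > 0 such that the punctured ball B_r(x) \ {x} is non-contractible, then X is locally geodesically complete. -/

import Mathlib

noncomputable section

open CategoryTheory Metric Filter Set Topology MeasureTheory
open scoped NNReal ENNReal Manifold

universe u v w


/-- `γ` restricted to `[a,b]` is a unit-speed minimizing geodesic. -/
def IsGeodesicOn {X : Type u} [MetricSpace X] (γ : ℝ → X) (a b : ℝ) : Prop :=
  ∀ s ∈ Set.Icc a b, ∀ t ∈ Set.Icc a b, dist (γ s) (γ t) = |s - t|

/-- A geodesic metric space: any two points are joined by a unit speed minimizing geodesic. -/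
def IsGeodesicSpace (X : Type u) [MetricSpace X] : Prop :=
  ∀ x y : X, ∃ γ : ℝ → X, γ 0 = x ∧ γ (dist x y) = y ∧ IsGeodesicOn γ 0 (dist x y)

/-- `γ` restricted to `[a,b]` is a (unit-speed) local geodesic: around every parameter it is
a minimizing geodesic. -/
def IsLocalGeodesicOn {X : Type u} [MetricSpace X] (γ : ℝ → X) (a b : ℝ) : Prop :=
  ∀ t ∈ Set.Icc a b, ∃ ε > 0, IsGeodesicOn γ (max a (t - ε)) (min b (t + ε))

/-- A metric space is locally geodesically complete if every local geodesic `γ : [a,b] → X`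
extends as a local geodesic to a larger interval `[a-ε, b+ε]`. -/
def LocallyGeodesicallyComplete (X : Type u) [MetricSpace X] : Prop :=
  ∀ (γ : ℝ → X) (a b : ℝ), a < b → IsLocalGeodesicOn γ a b →
    ∃ ε > 0, ∃ γ' : ℝ → X,
      IsLocalGeodesicOn γ' (a - ε) (b + ε) ∧ ∀ t ∈ Set.Icc a b, γ' t = γ t

/-- Inverse hyperbolic cosine. -/
def arcoshAux (x : ℝ) : ℝ := Real.log (x + Real.sqrt (x ^ 2 - 1))

/-- The angle at a vertex of a triangle in the model plane `M_κ` of constant curvature `κ`,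
between two sides of lengths `a` and `b`, where the opposite side has length `c`
(laws of cosines in the Euclidean plane, the round sphere, and the hyperbolic plane). -/
def modelAngle (κ a b c : ℝ) : ℝ :=
  if κ = 0 then Real.arccos ((a ^ 2 + b ^ 2 - c ^ 2) / (2 * a * b))
  else if 0 < κ then
    Real.arccos ((Real.cos (Real.sqrt κ * c) - Real.cos (Real.sqrt κ * a) * Real.cos (Real.sqrt κ * b)) /
      (Real.sin (Real.sqrt κ * a) * Real.sin (Real.sqrt κ * b)))
  else
    Real.arccos ((Real.cosh (Real.sqrt (-κ) * a) * Real.cosh (Real.sqrt (-κ) * b) -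
      Real.cosh (Real.sqrt (-κ) * c)) /
      (Real.sinh (Real.sqrt (-κ) * a) * Real.sinh (Real.sqrt (-κ) * b)))

/-- The length of the side opposite to the angle `θ` in a triangle of the model plane `M_κ` of
constant curvature `κ` whose two other sides have lengths `a` and `b`. -/
def modelSide (κ a b θ : ℝ) : ℝ :=
  if κ = 0 then Real.sqrt (a ^ 2 + b ^ 2 - 2 * a * b * Real.cos θ)
  else if 0 < κ then
    Real.arccos (Real.cos (Real.sqrt κ * a) * Real.cos (Real.sqrt κ * b) +
      Real.sin (Real.sqrt κ * a) * Real.sin (Real.sqrt κ * b) * Real.cos θ) / Real.sqrt κ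
  else
    arcoshAux (Real.cosh (Real.sqrt (-κ) * a) * Real.cosh (Real.sqrt (-κ) * b) -
      Real.sinh (Real.sqrt (-κ) * a) * Real.sinh (Real.sqrt (-κ) * b) * Real.cos θ) / Real.sqrt (-κ)

/-- The CAT(κ) comparison condition: every geodesic triangle of perimeter `< 2·π/√κ`
(no restriction if `κ ≤ 0`) is at least as thin as its comparison triangle in the model
plane `M_κ`: the distance from a vertex `p` to the point at parameter `t` on a geodesic
joining `q` to `r` is bounded by the corresponding distance in the comparison triangle. -/
def CATComparison (κ : ℝ) (X : Type u) [MetricSpace X] : Prop :=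
  ∀ p q r : X, ∀ γ : ℝ → X,
    γ 0 = q → γ (dist q r) = r → IsGeodesicOn γ 0 (dist q r) →
    (0 < κ → dist p q + dist q r + dist p r < 2 * (Real.pi / Real.sqrt κ)) →
    ∀ t ∈ Set.Icc 0 (dist q r),
      dist p (γ t) ≤ modelSide κ (dist p q) t (modelAngle κ (dist p q) (dist q r) (dist p r))

/-- A CAT(κ) space: a complete geodesic space in which every geodesic triangle of perimeter
less than `2·π/√κ` (no restriction if `κ ≤ 0`) is at least as thin as its comparison triangle
in the simply connected complete surface of constant curvature `κ`. -/
def IsCATSpace (κ : ℝ) (X : Type u) [MetricSpace X] : Prop :=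
  CompleteSpace X ∧ IsGeodesicSpace X ∧ CATComparison κ X

/-- `X` has curvature bounded above by `κ` (in the sense of Alexandrov) if every point has a
neighborhood which is a CAT(κ) space. -/
def CurvBoundedAbove (κ : ℝ) (X : Type u) [MetricSpace X] : Prop :=
  ∀ x : X, ∃ U : Set X, U ∈ nhds x ∧ IsCATSpace κ ↥U

/-- `X` has an upper curvature bound if it has curvature bounded above by some `κ ∈ ℝ`. -/
def HasUpperCurvatureBound (X : Type u) [MetricSpace X] : Prop :=
  ∃ κ : ℝ, CurvBoundedAbove κ X

/-- A GCBA space: a locally compact, separable metric space with an upper curvature bound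
which is locally geodesically complete. -/
def IsGCBA (X : Type u) [MetricSpace X] : Prop :=
  LocallyCompactSpace X ∧ TopologicalSpace.SeparableSpace X ∧
    HasUpperCurvatureBound X ∧ LocallyGeodesicallyComplete X

/- ## Spaces of directions and tangent cones -/

/-- The Euclidean comparison angle at the vertex of a triangle with adjacent sides `s, t` and
opposite side `d`. -/
def comparisonAngle (s t d : ℝ) : ℝ := Real.arccos ((s ^ 2 + t ^ 2 - d ^ 2) / (2 * s * t))

/-- `γ` is a unit-speed geodesic emanating from `x`. -/
def IsGeodesicFrom {X : Type u} [MetricSpace X] (x : X) (γ : ℝ → X) : Prop :=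
  γ 0 = x ∧ ∃ ε > 0, IsGeodesicOn γ 0 ε

/-- The type of unit speed geodesics emanating from `x`. -/
def GeodesicsFrom (X : Type u) [MetricSpace X] (x : X) : Type u :=
  {γ : ℝ → X // IsGeodesicFrom x γ}

/-- The upper angle between two geodesics emanating from the same point: the limsup of the
Euclidean comparison angles. -/
def upperAngle {X : Type u} [MetricSpace X] (γ σ : ℝ → X) : ℝ :=
  Filter.limsup (fun p : ℝ × ℝ => comparisonAngle p.1 p.2 (dist (γ p.1) (σ p.2)))
    ((nhdsWithin (0:ℝ) (Set.Ioi 0)) ×ˢ (nhdsWithin (0:ℝ) (Set.Ioi 0)))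

/-- `S` is (isometric to) the space of directions of `X` at `x`: the completion of the space of
directions of geodesics emanating from `x`, equipped with the angle metric.  This is encoded by
a map from geodesics emanating from `x` onto a dense subset of the complete space `S`,
which carries the upper angle to the distance of `S`. -/
def IsSpaceOfDirections (X : Type u) [MetricSpace X] (x : X) (S : Type v) [MetricSpace S] :
    Prop :=
  CompleteSpace S ∧ ∃ ι : GeodesicsFrom X x → S,
    DenseRange ι ∧ ∀ γ σ : GeodesicsFrom X x, dist (ι γ) (ι σ) = upperAngle γ.1 σ.1

/-- `T` is (isometric to) the tangent cone of `X` at `x`, i.e. the Euclidean cone over the space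
of directions of `X` at `x`.  This is encoded by a map `f` sending a radius `s ≥ 0` and a
geodesic emanating from `x` to a point of `T`, satisfying the Euclidean cone distance formula
with respect to the upper angle, and whose image (together with the apex `o`) is dense in the
complete space `T`. -/
def IsTangentCone (X : Type u) [MetricSpace X] (x : X) (T : Type v) [MetricSpace T] : Prop :=
  CompleteSpace T ∧ ∃ (o : T) (f : ℝ≥0 × GeodesicsFrom X x → T),
    (∀ γ, f (0, γ) = o) ∧
    Dense (insert o (Set.range f)) ∧
    ∀ (s t : ℝ≥0) (γ σ : GeodesicsFrom X x),
      dist (f (s, γ)) (f (t, σ)) =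
        Real.sqrt ((s:ℝ) ^ 2 + (t:ℝ) ^ 2 -
          2 * s * t * Real.cos (min (upperAngle γ.1 σ.1) Real.pi))

/-- The Euclidean cone over a metric space `S`, with apex `o`. -/
def IsEuclideanConeOver (S : Type u) [MetricSpace S] (C : Type v) [MetricSpace C] (o : C) :
    Prop :=
  ∃ f : ℝ≥0 × S → C,
    (∀ v, f (0, v) = o) ∧
    (∀ y : C, y = o ∨ ∃ p, f p = y) ∧
    ∀ (s t : ℝ≥0) (v w : S),
      dist (f (s, v)) (f (t, w)) =
        Real.sqrt ((s:ℝ) ^ 2 + (t:ℝ) ^ 2 - 2 * s * t * Real.cos (min (dist v w) Real.pi))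

/- ## Covering dimension and topological manifolds -/

/-- The covering dimension of `X` is at most `n`: every open cover admits an open refinement
of multiplicity at most `n + 1`. -/
def CovDimLE (X : Type u) [TopologicalSpace X] (n : ℕ) : Prop :=
  ∀ 𝒰 : Set (Set X), (∀ U ∈ 𝒰, IsOpen U) → ⋃₀ 𝒰 = Set.univ →
    ∃ 𝒱 : Set (Set X), (∀ V ∈ 𝒱, IsOpen V) ∧ ⋃₀ 𝒱 = Set.univ ∧
      (∀ V ∈ 𝒱, ∃ U ∈ 𝒰, V ⊆ U) ∧ ∀ x : X, Set.ncard {V | V ∈ 𝒱 ∧ x ∈ V} ≤ n + 1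

/-- `X` has finite (covering) topological dimension. -/
def HasFiniteCovDim (X : Type u) [TopologicalSpace X] : Prop := ∃ n : ℕ, CovDimLE X n

/-- The covering dimension of `X` is exactly `n`. -/
def CovDimEq (X : Type u) [TopologicalSpace X] (n : ℕ) : Prop :=
  CovDimLE X n ∧ ∀ m : ℕ, CovDimLE X m → n ≤ m

/-- `X` is purely `n`-dimensional: every non-empty open subset has covering dimension `n`. -/
def PurelyNDimensional (n : ℕ) (X : Type u) [TopologicalSpace X] : Prop :=
  ∀ V : Set X, IsOpen V → V.Nonempty → CovDimEq ↥V n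

/-- `X` is pure-dimensional: purely `n`-dimensional for some `n`. -/
def PureDimensional (X : Type u) [TopologicalSpace X] : Prop :=
  ∃ n : ℕ, PurelyNDimensional n X

/-- A topological `n`-manifold: a second countable Hausdorff space in which every point has an
open neighborhood homeomorphic to `ℝⁿ`. -/
def IsTopManifoldOfDim (n : ℕ) (X : Type u) [TopologicalSpace X] : Prop :=
  SecondCountableTopology X ∧ T2Space X ∧
    ∀ x : X, ∃ U : Set X, x ∈ U ∧ IsOpen U ∧ Nonempty (↥U ≃ₜ EuclideanSpace ℝ (Fin n))

/-- A topological manifold: a second countable Hausdorff space in which every point has an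
open neighborhood homeomorphic to `ℝⁿ` for some `n`. -/
def IsTopManifold (X : Type u) [TopologicalSpace X] : Prop :=
  SecondCountableTopology X ∧ T2Space X ∧
    ∀ x : X, ∃ (n : ℕ) (U : Set X), x ∈ U ∧ IsOpen U ∧
      Nonempty (↥U ≃ₜ EuclideanSpace ℝ (Fin n))



section BusemannAux
open Real
set_option maxHeartbeats 1000000




lemma arccos_anti' {x y : ℝ} (h : x ≤ y) : Real.arccos y ≤ Real.arccos x := by
  unfold Real.arccos; have := Real.monotone_arcsin h; linarith
lemma arcoshAux_cosh' {z : ℝ} (hz : 0 ≤ z) : arcoshAux (Real.cosh z) = z := by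
  unfold arcoshAux
  have h1 : Real.cosh z ^ 2 - 1 = Real.sinh z ^ 2 := by have := Real.cosh_sq z; linarith
  rw [h1, Real.sqrt_sq (Real.sinh_nonneg_iff.2 hz), Real.cosh_add_sinh, Real.log_exp]
lemma arcoshAux_mono' {a b : ℝ} (ha : 1 ≤ a) (hab : a ≤ b) : arcoshAux a ≤ arcoshAux b := by
  unfold arcoshAux
  have h0 : (0:ℝ) < a + Real.sqrt (a ^ 2 - 1) := by positivity
  apply Real.log_le_log h0
  have : Real.sqrt (a^2-1) ≤ Real.sqrt (b^2-1) := Real.sqrt_le_sqrt (by nlinarith)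
  linarith

private lemma aux_hyp_max {p q β B : ℝ} (hp : 0 < p) (hq : 0 < q) (hβ : 1 ≤ β) (hB : β ≤ B) :
    p*β + q*(1/β) ≤ max (p*1 + q*(1/1)) (p*B + q*(1/B)) := by
  have hβpos : (0:ℝ) < β := by linarith
  have hBpos : (0:ℝ) < B := by linarith
  rcases le_or_gt q (p*β*B) with hcase | hcase
  · apply le_max_of_le_right
    have h : q/(β*B) ≤ p := by rw [div_le_iff₀ (by positivity)]; nlinarith
    have key : p*β + q*(1/β) - (p*B + q*(1/B)) = (β - B)*(p - q/(β*B)) := by field_simp; ring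
    nlinarith [mul_nonneg (sub_nonneg.2 hB) (sub_nonneg.2 h)]
  · apply le_max_of_le_left
    have h : p ≤ q/β := by rw [le_div_iff₀ hβpos]; nlinarith
    have key : p*β + q*(1/β) - (p*1 + q*(1/1)) = (β - 1)*(p - q/β) := by field_simp; ring
    nlinarith [mul_nonneg (sub_nonneg.2 hβ) (sub_nonneg.2 h)]

private lemma hyp_case (s A L c t : ℝ) (hs : 0 < s) (hA : 0 < A) (hL : 0 < L) (hc : 0 ≤ c)
    (h1 : c ≤ A + L) (h2 : A ≤ c + L) (h3 : L ≤ c + A) (ht0 : 0 ≤ t) (htL : t ≤ L) :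
    arcoshAux (Real.cosh (s*A) * Real.cosh (s*t) - Real.sinh (s*A) * Real.sinh (s*t) *
      Real.cos (Real.arccos ((Real.cosh (s*A) * Real.cosh (s*L) - Real.cosh (s*c)) /
        (Real.sinh (s*A) * Real.sinh (s*L))))) / s ≤ max A c := by
  have hshA : 0 < Real.sinh (s*A) := Real.sinh_pos_iff.2 (by positivity)
  have hshL : 0 < Real.sinh (s*L) := Real.sinh_pos_iff.2 (by positivity)
  have hXle : (Real.cosh (s*A) * Real.cosh (s*L) - Real.cosh (s*c)) /
      (Real.sinh (s*A) * Real.sinh (s*L)) ≤ 1 := by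
    rw [div_le_one (by positivity)]
    have h4 : Real.cosh (s*A - s*L) ≤ Real.cosh (s*c) := by
      rw [Real.cosh_le_cosh, abs_of_nonneg (by positivity : (0:ℝ) ≤ s*c), abs_le]
      constructor <;> nlinarith
    have hsub := Real.cosh_sub (s*A) (s*L)
    nlinarith
  have hXge : -1 ≤ (Real.cosh (s*A) * Real.cosh (s*L) - Real.cosh (s*c)) /
      (Real.sinh (s*A) * Real.sinh (s*L)) := by
    rw [le_div_iff₀ (by positivity)]
    have h4 : Real.cosh (s*c) ≤ Real.cosh (s*A + s*L) := by
      rw [Real.cosh_le_cosh, abs_of_nonneg (by positivity : (0:ℝ) ≤ s*c),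
        abs_of_nonneg (by positivity)]
      nlinarith
    have hadd := Real.cosh_add (s*A) (s*L)
    nlinarith
  rw [Real.cos_arccos hXge hXle]
  set X := (Real.cosh (s*A) * Real.cosh (s*L) - Real.cosh (s*c)) /
      (Real.sinh (s*A) * Real.sinh (s*L)) with hX
  have hepos : 0 < Real.cosh (s*A) - Real.sinh (s*A) := by
    have h := Real.exp_pos (-(s*A))
    rw [← Real.cosh_add_sinh (-(s*A)), Real.cosh_neg, Real.sinh_neg] at h; linarith
  have hp : 0 < (Real.cosh (s*A) - Real.sinh (s*A) * X)/2 := by nlinarith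
  have hq : 0 < (Real.cosh (s*A) + Real.sinh (s*A) * X)/2 := by nlinarith
  have hGexp : ∀ u : ℝ, Real.cosh (s*A) * Real.cosh (s*u) - Real.sinh (s*A) * Real.sinh (s*u) * X
      = ((Real.cosh (s*A) - Real.sinh (s*A) * X)/2) * Real.exp (s*u)
        + ((Real.cosh (s*A) + Real.sinh (s*A) * X)/2) * (1/Real.exp (s*u)) := by
    intro u
    rw [Real.cosh_eq, Real.sinh_eq, Real.cosh_eq, Real.sinh_eq, Real.exp_neg, Real.exp_neg]
    have h5 : Real.exp (s*u) ≠ 0 := (Real.exp_pos _).ne'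
    field_simp
    ring
  have hβ1 : (1:ℝ) ≤ Real.exp (s*t) := Real.one_le_exp (by positivity)
  have hβB : Real.exp (s*t) ≤ Real.exp (s*L) := Real.exp_le_exp.2 (by nlinarith)
  have hGmax := aux_hyp_max hp hq hβ1 hβB
  rw [← hGexp t] at hGmax
  have hG0 : ((Real.cosh (s*A) - Real.sinh (s*A) * X)/2) * 1
      + ((Real.cosh (s*A) + Real.sinh (s*A) * X)/2) * (1/1) = Real.cosh (s*A) := by ring
  have hGLexp := hGexp L
  have hGL : Real.cosh (s*A) * Real.cosh (s*L) - Real.sinh (s*A) * Real.sinh (s*L) * X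
      = Real.cosh (s*c) := by
    rw [hX]; field_simp; ring
  rw [hG0, ← hGLexp, hGL] at hGmax
  have hmaxcosh : max (Real.cosh (s*A)) (Real.cosh (s*c)) = Real.cosh (s * max A c) := by
    rcases le_total A c with h | h
    · rw [max_eq_right h, max_eq_right]
      rw [Real.cosh_le_cosh, abs_of_nonneg (by positivity), abs_of_nonneg (by positivity)]
      nlinarith
    · rw [max_eq_left h, max_eq_left]
      rw [Real.cosh_le_cosh, abs_of_nonneg (by positivity), abs_of_nonneg (by positivity)]
      nlinarith
  rw [hmaxcosh] at hGmax
  have hG1 : 1 ≤ Real.cosh (s*A) * Real.cosh (s*t) - Real.sinh (s*A) * Real.sinh (s*t) * X := by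
    have hshu : 0 ≤ Real.sinh (s*t) := Real.sinh_nonneg_iff.2 (by positivity)
    have h4 : Real.sinh (s*A) * Real.sinh (s*t) * X ≤ Real.sinh (s*A) * Real.sinh (s*t) := by
      nlinarith [mul_nonneg hshA.le hshu]
    have hsub := Real.cosh_sub (s*A) (s*t)
    have h6 : 1 ≤ Real.cosh (s*A - s*t) := Real.one_le_cosh _
    nlinarith
  rw [div_le_iff₀ hs]
  calc arcoshAux (Real.cosh (s*A) * Real.cosh (s*t) - Real.sinh (s*A) * Real.sinh (s*t) * X)
      ≤ arcoshAux (Real.cosh (s * max A c)) := arcoshAux_mono' hG1 hGmax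
    _ = s * max A c := arcoshAux_cosh' (by positivity)
    _ = max A c * s := by ring

private lemma sph_case (s A L c t : ℝ) (hs : 0 < s) (hA : 0 < A) (hL : 0 < L) (hc : 0 ≤ c)
    (h1 : c ≤ A + L) (h2 : A ≤ c + L) (h3 : L ≤ c + A) (ht0 : 0 ≤ t) (htL : t ≤ L)
    (hsm : s * (A + L) ≤ π/2) :
    Real.arccos (Real.cos (s*A) * Real.cos (s*t) + Real.sin (s*A) * Real.sin (s*t) *
      Real.cos (Real.arccos ((Real.cos (s*c) - Real.cos (s*A) * Real.cos (s*L)) /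
        (Real.sin (s*A) * Real.sin (s*L))))) / s ≤ max A c := by
  have hπ := Real.pi_pos
  have hsA : s*A ≤ π/2 := by nlinarith
  have hsL : s*L ≤ π/2 := by nlinarith
  have hsc : s*c ≤ π/2 := by nlinarith
  have hsinA : 0 < Real.sin (s*A) := Real.sin_pos_of_pos_of_lt_pi (by positivity) (by nlinarith)
  have hsinL : 0 < Real.sin (s*L) := Real.sin_pos_of_pos_of_lt_pi (by positivity) (by nlinarith)
  have hXle : (Real.cos (s*c) - Real.cos (s*A) * Real.cos (s*L)) /
      (Real.sin (s*A) * Real.sin (s*L)) ≤ 1 := by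
    rw [div_le_one (by positivity)]
    have h5 : Real.cos (s*c) ≤ Real.cos |s*A - s*L| := by
      apply Real.cos_le_cos_of_nonneg_of_le_pi (abs_nonneg _) (by nlinarith)
      rw [abs_le]; constructor <;> nlinarith
    have h6 : Real.cos |s*A - s*L| = Real.cos (s*A - s*L) := Real.cos_abs _
    have h7 := Real.cos_sub (s*A) (s*L)
    nlinarith
  have hXge : -1 ≤ (Real.cos (s*c) - Real.cos (s*A) * Real.cos (s*L)) /
      (Real.sin (s*A) * Real.sin (s*L)) := by
    rw [le_div_iff₀ (by positivity)]
    have h5 : Real.cos (s*A + s*L) ≤ Real.cos (s*c) := by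
      apply Real.cos_le_cos_of_nonneg_of_le_pi (by positivity) (by nlinarith)
      nlinarith
    have h7 := Real.cos_add (s*A) (s*L)
    nlinarith
  rw [Real.cos_arccos hXge hXle]
  set X := (Real.cos (s*c) - Real.cos (s*A) * Real.cos (s*L)) /
      (Real.sin (s*A) * Real.sin (s*L)) with hX
  have hGL : Real.cos (s*A) * Real.cos (s*L) + Real.sin (s*A) * Real.sin (s*L) * X
      = Real.cos (s*c) := by
    rw [hX]; field_simp; ring
  have hmaxAL : max A c ≤ A + L := max_le (by linarith) h1
  have hsmax : s * max A c ≤ π/2 := by nlinarith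
  have hm0 : 0 ≤ Real.cos (s * max A c) :=
    Real.cos_nonneg_of_mem_Icc ⟨by nlinarith [le_max_left A c], hsmax⟩
  have hmaxnn : 0 ≤ max A c := le_max_of_le_left hA.le
  have hcosAm : Real.cos (s * max A c) ≤ Real.cos (s*A) := by
    apply Real.cos_le_cos_of_nonneg_of_le_pi (by positivity) (by nlinarith)
    nlinarith [le_max_left A c]
  have hcoscm : Real.cos (s * max A c) ≤ Real.cos (s*c) := by
    apply Real.cos_le_cos_of_nonneg_of_le_pi (by positivity) (by nlinarith)
    nlinarith [le_max_right A c]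
  have hsin1 : 0 ≤ Real.sin (s*L - s*t) :=
    Real.sin_nonneg_of_nonneg_of_le_pi (by nlinarith) (by nlinarith)
  have hsin2 : 0 ≤ Real.sin (s*t) :=
    Real.sin_nonneg_of_nonneg_of_le_pi (by positivity) (by nlinarith)
  have hkey : Real.sin (s*L) * (Real.cos (s*A) * Real.cos (s*t) + Real.sin (s*A) * Real.sin (s*t) * X)
      = Real.sin (s*L - s*t) * Real.cos (s*A)
        + Real.sin (s*t) * (Real.cos (s*A) * Real.cos (s*L) + Real.sin (s*A) * Real.sin (s*L) * X) := by
    rw [Real.sin_sub]; ring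
  have hsinsum : Real.sin (s*L) ≤ Real.sin (s*L - s*t) + Real.sin (s*t) := by
    have h8 : s*L = (s*L - s*t) + s*t := by ring
    nth_rewrite 1 [h8]
    rw [Real.sin_add]
    have c1 : Real.cos (s*t) ≤ 1 := Real.cos_le_one _
    have c2 : Real.cos (s*L - s*t) ≤ 1 := Real.cos_le_one _
    nlinarith
  have hGt : Real.cos (s * max A c)
      ≤ Real.cos (s*A) * Real.cos (s*t) + Real.sin (s*A) * Real.sin (s*t) * X := by
    have t1 : Real.sin (s*L - s*t) * Real.cos (s * max A c) ≤ Real.sin (s*L - s*t) * Real.cos (s*A) :=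
      mul_le_mul_of_nonneg_left hcosAm hsin1
    have t2 : Real.sin (s*t) * Real.cos (s * max A c) ≤ Real.sin (s*t) * Real.cos (s*c) :=
      mul_le_mul_of_nonneg_left hcoscm hsin2
    rw [hGL] at hkey
    have step : Real.sin (s*L) * Real.cos (s * max A c)
        ≤ Real.sin (s*L) * (Real.cos (s*A) * Real.cos (s*t) + Real.sin (s*A) * Real.sin (s*t) * X) := by
      nlinarith
    exact le_of_mul_le_mul_left step hsinL
  rw [div_le_iff₀ hs]
  calc Real.arccos (Real.cos (s*A) * Real.cos (s*t) + Real.sin (s*A) * Real.sin (s*t) * X)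
      ≤ Real.arccos (Real.cos (s * max A c)) := arccos_anti' hGt
    _ = s * max A c := Real.arccos_cos (by positivity) (by nlinarith)
    _ = max A c * s := by ring

private lemma flat_case (A L c t : ℝ) (hA : 0 < A) (hL : 0 < L) (hc : 0 ≤ c)
    (h1 : c ≤ A + L) (h2 : A ≤ c + L) (h3 : L ≤ c + A) (ht0 : 0 ≤ t) (htL : t ≤ L) :
    Real.sqrt (A^2 + t^2 - 2*A*t*Real.cos (Real.arccos ((A^2 + L^2 - c^2)/(2*A*L)))) ≤ max A c := by
  have hXle : (A^2 + L^2 - c^2)/(2*A*L) ≤ 1 := by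
    rw [div_le_one (by positivity)]; nlinarith
  have hXge : -1 ≤ (A^2 + L^2 - c^2)/(2*A*L) := by
    rw [le_div_iff₀ (by positivity)]; nlinarith
  rw [Real.cos_arccos hXge hXle]
  set X := (A^2 + L^2 - c^2)/(2*A*L) with hX
  have hmax0 : 0 ≤ max A c := le_max_of_le_left hA.le
  have hvL : A^2 + L^2 - 2*A*L*X = c^2 := by rw [hX]; field_simp; ring
  have hval : A^2 + t^2 - 2*A*t*X ≤ (max A c)^2 := by
    rcases le_or_gt (2*A*X) (t + L) with hcase | hcase
    · have h9 : A^2 + t^2 - 2*A*t*X ≤ c^2 := by nlinarith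
      nlinarith [le_max_right A c]
    · have h9 : A^2 + t^2 - 2*A*t*X ≤ A^2 := by nlinarith
      nlinarith [le_max_left A c]
  calc Real.sqrt (A^2 + t^2 - 2*A*t*X) ≤ Real.sqrt ((max A c)^2) := Real.sqrt_le_sqrt hval
    _ = max A c := Real.sqrt_sq hmax0

/-- The main convexity estimate for model triangles. -/
lemma modelSide_angle_le_max (κ A L c t : ℝ) (hA : 0 < A) (hL : 0 < L) (hc : 0 ≤ c)
    (h1 : c ≤ A + L) (h2 : A ≤ c + L) (h3 : L ≤ c + A)
    (ht0 : 0 ≤ t) (htL : t ≤ L)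
    (hsmall : 0 < κ → Real.sqrt κ * (A + L) ≤ π / 2) :
    modelSide κ A t (modelAngle κ A L c) ≤ max A c := by
  rcases lt_trichotomy κ 0 with hκ | hκ | hκ
  · have hκ0 : κ ≠ 0 := ne_of_lt hκ
    have hκ1 : ¬ (0 < κ) := by linarith
    rw [modelSide, modelAngle, if_neg hκ0, if_neg hκ1, if_neg hκ0, if_neg hκ1]
    exact hyp_case _ A L c t (Real.sqrt_pos.2 (by linarith)) hA hL hc h1 h2 h3 ht0 htL
  · subst hκ
    rw [modelSide, modelAngle, if_pos rfl, if_pos rfl]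
    exact flat_case A L c t hA hL hc h1 h2 h3 ht0 htL
  · have hκ0 : κ ≠ 0 := ne_of_gt hκ
    rw [modelSide, modelAngle, if_neg hκ0, if_pos hκ, if_neg hκ0, if_pos hκ]
    exact sph_case _ A L c t (Real.sqrt_pos.2 hκ) hA hL hc h1 h2 h3 ht0 htL (hsmall hκ)

/-- `modelAngle` of a degenerate triangle is zero. -/
lemma modelAngle_degenerate (κ A L : ℝ) (hA : 0 < A) (hAL : A ≤ L)
    (hsm : 0 < κ → Real.sqrt κ * L < π) :
    modelAngle κ A L (L - A) = 0 := by
  have hL : 0 < L := lt_of_lt_of_le hA hAL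
  rcases lt_trichotomy κ 0 with hκ | hκ | hκ
  · have hκ0 : κ ≠ 0 := ne_of_lt hκ
    have hκ1 : ¬ (0 < κ) := by linarith
    rw [modelAngle, if_neg hκ0, if_neg hκ1]
    set s := Real.sqrt (-κ) with hs
    have hspos : 0 < s := Real.sqrt_pos.2 (by linarith)
    have hshA : 0 < Real.sinh (s*A) := Real.sinh_pos_iff.2 (by positivity)
    have hshL : 0 < Real.sinh (s*L) := Real.sinh_pos_iff.2 (by positivity)
    have harg : (Real.cosh (s*A) * Real.cosh (s*L) - Real.cosh (s*(L-A))) /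
        (Real.sinh (s*A) * Real.sinh (s*L)) = 1 := by
      have h4 : s*(L-A) = s*L - s*A := by ring
      rw [h4, Real.cosh_sub]
      field_simp
      ring
    rw [harg, Real.arccos_one]
  · subst hκ
    rw [modelAngle, if_pos rfl]
    have harg : (A^2 + L^2 - (L-A)^2)/(2*A*L) = 1 := by
      field_simp; ring
    rw [harg, Real.arccos_one]
  · have hκ0 : κ ≠ 0 := ne_of_gt hκ
    rw [modelAngle, if_neg hκ0, if_pos hκ]
    set s := Real.sqrt κ with hs
    have hspos : 0 < s := Real.sqrt_pos.2 hκ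
    have hπ := hsm hκ
    have hsinA : 0 < Real.sin (s*A) :=
      Real.sin_pos_of_pos_of_lt_pi (by positivity) (by nlinarith)
    have hsinL : 0 < Real.sin (s*L) :=
      Real.sin_pos_of_pos_of_lt_pi (by positivity) (by nlinarith)
    have harg : (Real.cos (s*(L-A)) - Real.cos (s*A) * Real.cos (s*L)) /
        (Real.sin (s*A) * Real.sin (s*L)) = 1 := by
      have h4 : s*(L-A) = s*L - s*A := by ring
      rw [h4, Real.cos_sub]
      field_simp
      ring
    rw [harg, Real.arccos_one]

/-- `modelSide` with angle `0` and equal adjacent sides is zero. -/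
lemma modelSide_self_zero (κ u : ℝ) : modelSide κ u u 0 = 0 := by
  rcases lt_trichotomy κ 0 with hκ | hκ | hκ
  · have hκ0 : κ ≠ 0 := ne_of_lt hκ
    have hκ1 : ¬ (0 < κ) := by linarith
    rw [modelSide, if_neg hκ0, if_neg hκ1, Real.cos_zero, mul_one]
    have h4 : Real.cosh (Real.sqrt (-κ)*u) * Real.cosh (Real.sqrt (-κ)*u)
        - Real.sinh (Real.sqrt (-κ)*u) * Real.sinh (Real.sqrt (-κ)*u) = 1 := by
      have := Real.cosh_sq_sub_sinh_sq (Real.sqrt (-κ)*u)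
      nlinarith
    rw [h4]
    unfold arcoshAux
    norm_num
  · subst hκ
    rw [modelSide, if_pos rfl, Real.cos_zero]
    have h4 : u^2 + u^2 - 2*u*u*1 = 0 := by ring
    rw [h4, Real.sqrt_zero]
  · have hκ0 : κ ≠ 0 := ne_of_gt hκ
    rw [modelSide, if_neg hκ0, if_pos hκ, Real.cos_zero, mul_one]
    have h4 : Real.cos (Real.sqrt κ*u) * Real.cos (Real.sqrt κ*u)
        + Real.sin (Real.sqrt κ*u) * Real.sin (Real.sqrt κ*u) = 1 := by
      have := Real.sin_sq_add_cos_sq (Real.sqrt κ*u)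
      nlinarith
    rw [h4, Real.arccos_one, zero_div]

lemma continuousAt_arcoshAux {x : ℝ} (hx : 1 ≤ x) : ContinuousAt arcoshAux x := by
  unfold arcoshAux
  have h1 : ContinuousAt (fun y : ℝ => y + Real.sqrt (y^2-1)) x := by fun_prop
  have h2 : x + Real.sqrt (x^2-1) ≠ 0 := by positivity
  exact ContinuousAt.comp (g := Real.log) (Real.continuousAt_log h2) h1

/-- Joint continuity of the comparison distance function. -/
lemma continuousAt_modelF (κ t₀ d₀ c₀ : ℝ) (ht : 0 < t₀) (hd : 0 < d₀)
    (hsm : 0 < κ → Real.sqrt κ * t₀ < π ∧ Real.sqrt κ * d₀ < π) :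
    ContinuousAt (fun v : ℝ × ℝ × ℝ => modelSide κ v.1 v.1 (modelAngle κ v.1 v.2.1 v.2.2))
      (t₀, d₀, c₀) := by
  rcases lt_trichotomy κ 0 with hκ | hκ | hκ
  · have hκ0 : κ ≠ 0 := ne_of_lt hκ
    have hκ1 : ¬ (0 < κ) := by linarith
    simp only [modelSide, modelAngle, if_neg hκ0, if_neg hκ1]
    set s := Real.sqrt (-κ) with hs
    have hspos : 0 < s := Real.sqrt_pos.2 (by linarith)
    apply ContinuousAt.div_const
    have hang : ContinuousAt (fun v : ℝ × ℝ × ℝ =>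
        Real.arccos ((Real.cosh (s*v.1) * Real.cosh (s*v.2.1) - Real.cosh (s*v.2.2)) /
          (Real.sinh (s*v.1) * Real.sinh (s*v.2.1)))) (t₀, d₀, c₀) := by
      apply Real.continuous_arccos.continuousAt.comp
      apply ContinuousAt.div (by fun_prop) (by fun_prop)
      have h1 : 0 < Real.sinh (s*t₀) := Real.sinh_pos_iff.2 (by positivity)
      have h2 : 0 < Real.sinh (s*d₀) := Real.sinh_pos_iff.2 (by positivity)
      positivity
    have hinner : ContinuousAt (fun v : ℝ × ℝ × ℝ =>
        Real.cosh (s*v.1) * Real.cosh (s*v.1) - Real.sinh (s*v.1) * Real.sinh (s*v.1) *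
          Real.cos (Real.arccos ((Real.cosh (s*v.1) * Real.cosh (s*v.2.1) - Real.cosh (s*v.2.2)) /
            (Real.sinh (s*v.1) * Real.sinh (s*v.2.1))))) (t₀, d₀, c₀) := by
      apply ContinuousAt.sub (by fun_prop)
      exact ((by fun_prop : ContinuousAt (fun v : ℝ × ℝ × ℝ =>
        Real.sinh (s*v.1) * Real.sinh (s*v.1)) (t₀, d₀, c₀))).mul
        (Real.continuous_cos.continuousAt.comp hang)
    refine ContinuousAt.comp (g := arcoshAux) ?_ hinner
    apply continuousAt_arcoshAux
    have hc1 : Real.cos (Real.arccos ((Real.cosh (s*t₀) * Real.cosh (s*d₀) - Real.cosh (s*c₀)) /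
        (Real.sinh (s*t₀) * Real.sinh (s*d₀)))) ≤ 1 := Real.cos_le_one _
    have h5 := Real.cosh_sq_sub_sinh_sq (s*t₀)
    nlinarith [sq_nonneg (Real.sinh (s*t₀)), Real.cosh_pos (s*t₀)]
  · subst hκ
    simp only [modelSide, modelAngle, if_pos]
    apply Real.continuous_sqrt.continuousAt.comp
    apply ContinuousAt.sub (by fun_prop)
    apply ContinuousAt.mul (by fun_prop)
    apply Real.continuous_cos.continuousAt.comp
    apply Real.continuous_arccos.continuousAt.comp
    apply ContinuousAt.div (by fun_prop) (by fun_prop)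
    simp only []
    positivity
  · have hκ0 : κ ≠ 0 := ne_of_gt hκ
    obtain ⟨hst, hsd⟩ := hsm hκ
    simp only [modelSide, modelAngle, if_neg hκ0, if_pos hκ]
    set s := Real.sqrt κ with hs
    have hspos : 0 < s := Real.sqrt_pos.2 hκ
    apply ContinuousAt.div_const
    apply Real.continuous_arccos.continuousAt.comp
    apply ContinuousAt.add (by fun_prop)
    apply ContinuousAt.mul (by fun_prop)
    apply Real.continuous_cos.continuousAt.comp
    apply Real.continuous_arccos.continuousAt.comp
    apply ContinuousAt.div (by fun_prop) (by fun_prop)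
    have h1 : 0 < Real.sin (s*t₀) := Real.sin_pos_of_pos_of_lt_pi (by positivity) hst
    have h2 : 0 < Real.sin (s*d₀) := Real.sin_pos_of_pos_of_lt_pi (by positivity) hsd
    positivity







lemma IsGeodesicOn.mono {X : Type u} [MetricSpace X] {γ : ℝ → X} {a b a' b' : ℝ}
    (h : IsGeodesicOn γ a b) (h1 : a ≤ a') (h2 : b' ≤ b) : IsGeodesicOn γ a' b' :=
  fun s hs t ht => h s ⟨h1.trans hs.1, hs.2.trans h2⟩ t ⟨h1.trans ht.1, ht.2.trans h2⟩

lemma IsGeodesicOn.congr {X : Type u} [MetricSpace X] {γ γ' : ℝ → X} {a b : ℝ}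
    (h : IsGeodesicOn γ a b) (he : ∀ t ∈ Set.Icc a b, γ' t = γ t) : IsGeodesicOn γ' a b := by
  intro s hs t ht
  rw [he s hs, he t ht]
  exact h s hs t ht

lemma IsLocalGeodesicOn.mono {X : Type u} [MetricSpace X] {γ : ℝ → X} {a b a' b' : ℝ}
    (h : IsLocalGeodesicOn γ a b) (h1 : a ≤ a') (h2 : b' ≤ b) : IsLocalGeodesicOn γ a' b' := by
  intro t ht
  obtain ⟨ε, hε, hg⟩ := h t ⟨h1.trans ht.1, ht.2.trans h2⟩
  exact ⟨ε, hε, hg.mono (max_le_max h1 le_rfl) (min_le_min h2 le_rfl)⟩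

lemma IsLocalGeodesicOn.reflect {X : Type u} [MetricSpace X] {γ : ℝ → X} {a b : ℝ}
    (h : IsLocalGeodesicOn γ a b) : IsLocalGeodesicOn (fun t => γ (a + b - t)) a b := by
  intro t ht
  obtain ⟨ε, hε, hg⟩ := h (a + b - t) ⟨by linarith [ht.2], by linarith [ht.1]⟩
  refine ⟨ε, hε, ?_⟩
  intro s hs u hu
  have hs1 := max_le_iff.1 hs.1
  have hs2 := le_min_iff.1 hs.2
  have hu1 := max_le_iff.1 hu.1
  have hu2 := le_min_iff.1 hu.2
  have e1 : dist (γ (a + b - s)) (γ (a + b - u)) = |(a + b - s) - (a + b - u)| := by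
    apply hg (a+b-s) ⟨max_le (by linarith) (by linarith), le_min (by linarith) (by linarith)⟩
      (a+b-u) ⟨max_le (by linarith) (by linarith), le_min (by linarith) (by linarith)⟩
  simp only []
  rw [e1, abs_sub_comm]
  congr 1
  ring

lemma IsLocalGeodesicOn.shift {X : Type u} [MetricSpace X] {γ : ℝ → X} {a b c : ℝ}
    (h : IsLocalGeodesicOn γ a b) : IsLocalGeodesicOn (fun t => γ (t + c)) (a - c) (b - c) := by
  intro t ht
  obtain ⟨ε, hε, hg⟩ := h (t + c) ⟨by linarith [ht.1], by linarith [ht.2]⟩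
  refine ⟨ε, hε, ?_⟩
  intro s hs u hu
  have hs1 := max_le_iff.1 hs.1
  have hs2 := le_min_iff.1 hs.2
  have hu1 := max_le_iff.1 hu.1
  have hu2 := le_min_iff.1 hu.2
  have e1 : dist (γ (s + c)) (γ (u + c)) = |(s + c) - (u + c)| := by
    apply hg (s+c) ⟨max_le (by linarith) (by linarith), le_min (by linarith) (by linarith)⟩
      (u+c) ⟨max_le (by linarith) (by linarith), le_min (by linarith) (by linarith)⟩
  simp only []
  rw [e1]
  congr 1
  ring

/-- If no geodesic from `q` extends through `x`, the punctured ball is contractible. -/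
lemma contraction_of_strict {X : Type u} [MetricSpace X] {κ : ℝ} {U : Set X}
    (hGS : IsGeodesicSpace ↥U) (hCAT : CATComparison κ ↥U)
    {x q : X} {r : ℝ} (hr : 0 < r)
    (hκr : 0 < κ → Real.sqrt κ * r < Real.pi / 10)
    (hUball : Metric.ball x r ⊆ U) (hqU : q ∈ U)
    (hqx : dist q x = r / 2)
    (hstrict : ∀ y ∈ Metric.ball x r \ {x}, dist q y < r / 2 + dist x y) :
    ContractibleSpace ↥(Metric.ball x r \ {x}) := by
  have hπ := Real.pi_pos
  set S := Metric.ball x r \ {x} with hSdef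
  have hxU : x ∈ U := hUball (Metric.mem_ball_self hr)
  set qU : ↥U := ⟨q, hqU⟩ with hqUdef
  set xU : ↥U := ⟨x, hxU⟩ with hxUdef
  choose σ hσ0 hσd hσg using hGS qU
  have hDQ : ∀ z : ↥U, dist qU z = dist q (z : X) := fun z => Subtype.dist_eq _ _
  have hgeo : ∀ z : ↥U, ∀ s ∈ Set.Icc (0:ℝ) (dist q (z:X)), ∀ t ∈ Set.Icc (0:ℝ) (dist q (z:X)),
      dist ((σ z s : X)) ((σ z t : X)) = |s - t| := by
    intro z s hs t ht
    rw [← Subtype.dist_eq]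
    exact hσg z s (by rwa [hDQ z]) t (by rwa [hDQ z])
  have hσ0' : ∀ z : ↥U, (σ z 0 : X) = q := fun z => congrArg Subtype.val (hσ0 z)
  have hσd' : ∀ z : ↥U, (σ z (dist q (z:X)) : X) = (z : X) := by
    intro z
    rw [← hDQ z]
    exact congrArg Subtype.val (hσd z)
  have hdq : ∀ z : ↥U, ∀ t ∈ Set.Icc (0:ℝ) (dist q (z:X)), dist q ((σ z t : X)) = t := by
    intro z t ht
    have h1 := hgeo z 0 ⟨le_rfl, dist_nonneg⟩ t ht
    rw [hσ0' z] at h1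
    rw [h1, zero_sub, abs_neg, abs_of_nonneg ht.1]
  have hdy : ∀ z : ↥U, ∀ t ∈ Set.Icc (0:ℝ) (dist q (z:X)),
      dist ((σ z t : X)) (z:X) = dist q (z:X) - t := by
    intro z t ht
    have h1 := hgeo z t ht (dist q (z:X)) ⟨dist_nonneg, le_rfl⟩
    rw [hσd' z] at h1
    rw [h1, abs_of_nonpos (by linarith [ht.2])]
    ring
  have hper : 0 < κ → ∀ d1 d2 d3 : ℝ, d1 ≤ 4*r → d2 ≤ 4*r → d3 ≤ 4*r →
      d1 + d2 + d3 < 2 * (Real.pi / Real.sqrt κ) := by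
    intro hκpos d1 d2 d3 h1 h2 h3
    have hs : 0 < Real.sqrt κ := Real.sqrt_pos.2 hκpos
    have h4 := hκr hκpos
    have h5 : (d1 + d2 + d3) * Real.sqrt κ < 2 * Real.pi := by nlinarith
    have h6 : d1 + d2 + d3 < 2 * Real.pi / Real.sqrt κ := (lt_div_iff₀ hs).2 h5
    have h7 : 2 * (Real.pi / Real.sqrt κ) = 2 * Real.pi / Real.sqrt κ := by ring
    linarith
  have hcomp : ∀ (p z : ↥U),
      (0 < κ → dist (p:X) q + dist q (z:X) + dist (p:X) (z:X) < 2 * (Real.pi / Real.sqrt κ)) →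
      ∀ t ∈ Set.Icc (0:ℝ) (dist q (z:X)),
      dist (p:X) ((σ z t : X)) ≤ modelSide κ (dist (p:X) q) t
        (modelAngle κ (dist (p:X) q) (dist q (z:X)) (dist (p:X) (z:X))) := by
    intro p z hperi t ht
    have h1 := hCAT p qU z (σ z) (hσ0 z) (hσd z) (hσg z)
      (by intro hκpos
          rw [hDQ z, Subtype.dist_eq p qU, Subtype.dist_eq p z]
          exact hperi hκpos)
      t (by rwa [hDQ z])
    rwa [Subtype.dist_eq p (σ z t), Subtype.dist_eq p qU, hDQ z, Subtype.dist_eq p z] at h1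
  -- inclusion of the punctured ball into U
  have hSU : ∀ p : ↥S, (p : X) ∈ U := fun p => hUball p.2.1
  set inc : ↥S → ↥U := fun p => ⟨(p : X), hSU p⟩ with hincdef
  have hyb : ∀ p : ↥S, dist ((p:X)) x < r := fun p => Metric.mem_ball.1 p.2.1
  have hyx : ∀ p : ↥S, (p:X) ≠ x := fun p => p.2.2
  have hLb : ∀ p : ↥S, dist q ((p:X)) < 3/2*r := by
    intro p
    have h1 := dist_triangle q x ((p:X))
    have h2 : dist x ((p:X)) = dist ((p:X)) x := dist_comm _ _
    linarith [hyb p]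
  -- Key 1: the geodesics stay inside the punctured ball
  have hKEY1 : ∀ p : ↥S, ∀ t ∈ Set.Icc (0:ℝ) (dist q ((p:X))), (σ (inc p) t : X) ∈ S := by
    intro p t ht
    have hxq : dist x q = r/2 := by rw [dist_comm]; exact hqx
    constructor
    · rcases eq_or_lt_of_le (dist_nonneg : (0:ℝ) ≤ dist q ((p:X))) with hD0 | hDpos
      · have ht0 : t = 0 := le_antisymm (hD0 ▸ ht.2) ht.1
        rw [ht0, hσ0']
        rw [Metric.mem_ball]
        rw [hqx]
        linarith
      · have hperi : 0 < κ → dist (xU:X) q + dist q ((inc p:X)) + dist (xU:X) ((inc p:X))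
            < 2 * (Real.pi / Real.sqrt κ) := by
          intro hκpos
          apply hper hκpos
          · show dist x q ≤ 4*r; rw [hxq]; linarith
          · show dist q ((p:X)) ≤ 4*r; linarith [hLb p]
          · show dist x ((p:X)) ≤ 4*r
            rw [dist_comm]; linarith [hyb p]
        have hcmp := hcomp xU (inc p) hperi t ht
        have hconv : modelSide κ (dist x q) t
            (modelAngle κ (dist x q) (dist q ((p:X))) (dist x ((p:X))))
            ≤ max (dist x q) (dist x ((p:X))) := by
          rw [hxq]
          apply modelSide_angle_le_max κ (r/2) (dist q ((p:X))) (dist x ((p:X))) t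
            (by linarith) hDpos dist_nonneg
          · have := dist_triangle x q ((p:X)); linarith
          · have := dist_triangle x ((p:X)) q
            have h9 : dist ((p:X)) q = dist q ((p:X)) := dist_comm _ _
            linarith
          · have := dist_triangle q x ((p:X)); rw [hqx] at this; linarith
          · exact ht.1
          · exact ht.2
          · intro hκpos
            have h4 := hκr hκpos
            have hs : (0:ℝ) ≤ Real.sqrt κ := Real.sqrt_nonneg κ
            nlinarith [hLb p]
        rw [Metric.mem_ball, dist_comm]
        have hmax : max (dist x q) (dist x ((p:X))) < r := by
          apply max_lt
          · rw [hxq]; linarith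
          · rw [dist_comm]; exact hyb p
        calc dist x ((σ (inc p) t : X)) ≤ _ := hcmp
          _ ≤ max (dist x q) (dist x ((p:X))) := hconv
          _ < r := hmax
    · intro hmem
      have heq : (σ (inc p) t : X) = x := hmem
      have h1 := hdq (inc p) t ht
      have h2 := hdy (inc p) t ht
      rw [heq] at h1 h2
      rw [hqx] at h1
      have h3 : dist q ((p:X)) = r/2 + dist x ((p:X)) := by
        have : dist x ((p:X)) = dist q ((p:X)) - t := h2
        linarith
      exact absurd h3 (ne_of_lt (hstrict ((p:X)) p.2))
  -- the contraction map
  set T : unitInterval × ↥S → ℝ := fun w => (1 - ((w.1 : ℝ))) * dist q ((w.2 : X)) with hTdef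
  have hTmem : ∀ w, T w ∈ Set.Icc (0:ℝ) (dist q ((w.2:X))) := by
    intro w
    simp only [hTdef]
    constructor
    · exact mul_nonneg (by linarith [w.1.2.2]) dist_nonneg
    · nlinarith [mul_nonneg w.1.2.1 (dist_nonneg (x := q) (y := (w.2:X))),
        dist_nonneg (x := q) (y := (w.2:X))]
  set H : unitInterval × ↥S → X := fun w => (σ (inc w.2) (T w) : X) with hHdef
  have hHcont : Continuous H := by
    rw [continuous_iff_continuousAt]
    intro w₀
    set y₀ := ((w₀.2 : X)) with hy₀def
    set L₀ := dist q y₀ with hL₀def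
    set t₀ := T w₀ with ht₀def
    have hconty : Tendsto (fun w : unitInterval × ↥S => ((w.2 : X))) (𝓝 w₀) (𝓝 y₀) :=
      ((continuous_subtype_val.comp continuous_snd).tendsto w₀)
    have hcontL : Tendsto (fun w : unitInterval × ↥S => dist q ((w.2:X))) (𝓝 w₀) (𝓝 L₀) :=
      tendsto_const_nhds.dist hconty
    have hcontu : Tendsto (fun w : unitInterval × ↥S => ((w.1 : ℝ))) (𝓝 w₀) (𝓝 ((w₀.1:ℝ))) :=
      ((continuous_subtype_val.comp continuous_fst).tendsto w₀)
    have hcontT : Tendsto T (𝓝 w₀) (𝓝 t₀) := (tendsto_const_nhds.sub hcontu).mul hcontL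
    rcases eq_or_lt_of_le (hTmem w₀).1 with h0 | hpos
    · -- t₀ = 0 : the limit point is q
      have hHw₀ : H w₀ = q := by
        show (σ (inc w₀.2) (T w₀) : X) = q
        rw [← h0, hσ0']
      apply tendsto_iff_dist_tendsto_zero.2
      have heqfun : (fun w => dist (H w) (H w₀)) = T := by
        funext w
        rw [hHw₀, dist_comm]
        exact hdq (inc w.2) (T w) (hTmem w)
      have h2 : t₀ = 0 := h0.symm
      rw [heqfun, ← h2]
      exact hcontT
    · -- t₀ > 0
      have hL₀pos : 0 < L₀ := lt_of_lt_of_le hpos (hTmem w₀).2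
      apply tendsto_iff_dist_tendsto_zero.2
      have huuT : Tendsto (fun w => min (T w) t₀) (𝓝 w₀) (𝓝 t₀) := by
        have h1 := hcontT.min (tendsto_const_nhds (x := t₀))
        rwa [min_self] at h1
      have hbound : ∀ w : unitInterval × ↥S, dist (H w) (H w₀) ≤
          (T w - min (T w) t₀) + modelSide κ (min (T w) t₀) (min (T w) t₀)
            (modelAngle κ (min (T w) t₀) L₀ (dist ((σ (inc w.2) (min (T w) t₀) : X)) y₀))
          + (t₀ - min (T w) t₀) := by
        intro w
        set uu := min (T w) t₀ with huudef
        have huu0 : 0 ≤ uu := le_min (hTmem w).1 hpos.le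
        have huuT' : uu ≤ T w := min_le_left _ _
        have huut₀ : uu ≤ t₀ := min_le_right _ _
        have huuLw : uu ∈ Set.Icc (0:ℝ) (dist q ((w.2:X))) := ⟨huu0, le_trans huuT' (hTmem w).2⟩
        have huuL₀ : uu ∈ Set.Icc (0:ℝ) L₀ := ⟨huu0, le_trans huut₀ (hTmem w₀).2⟩
        have step1 : dist (H w) ((σ (inc w.2) uu : X)) = T w - uu := by
          have h1 := hgeo (inc w.2) (T w) (hTmem w) uu huuLw
          rw [h1, abs_of_nonneg (by linarith)]
        have hPq : dist ((σ (inc w.2) uu : X)) q = uu := by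
          rw [dist_comm]; exact hdq (inc w.2) uu huuLw
        have step2 : dist ((σ (inc w.2) uu : X)) ((σ (inc w₀.2) uu : X)) ≤
            modelSide κ uu uu (modelAngle κ uu L₀ (dist ((σ (inc w.2) uu : X)) y₀)) := by
          have hperi : 0 < κ → dist ((σ (inc w.2) uu : X)) q + dist q ((inc w₀.2 : X))
              + dist ((σ (inc w.2) uu : X)) ((inc w₀.2 : X)) < 2 * (Real.pi / Real.sqrt κ) := by
            intro hκpos
            apply hper hκpos
            · rw [hPq]
              have := hLb w.2
              have := (hTmem w).2
              linarith [huuT', hr]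
            · show dist q y₀ ≤ 4*r
              linarith [hLb w₀.2]
            · show dist _ y₀ ≤ 4*r
              have h8 := dist_triangle ((σ (inc w.2) uu : X)) q y₀
              rw [hPq] at h8
              have h9 := hLb w₀.2
              have h10 := (hTmem w).2
              have h11 := hLb w.2
              linarith
          have h1 := hcomp ((σ (inc w.2) uu)) (inc w₀.2) hperi uu huuL₀
          rwa [hPq] at h1
        have step3 : dist ((σ (inc w₀.2) uu : X)) (H w₀) = t₀ - uu := by
          have h1 := hgeo (inc w₀.2) uu huuL₀ (T w₀) (hTmem w₀)
          rw [h1, ← ht₀def, abs_of_nonpos (by linarith)]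
          ring
        calc dist (H w) (H w₀) ≤ dist (H w) ((σ (inc w.2) uu : X))
              + dist ((σ (inc w.2) uu : X)) ((σ (inc w₀.2) uu : X))
              + dist ((σ (inc w₀.2) uu : X)) (H w₀) := dist_triangle4 _ _ _ _
          _ ≤ (T w - uu) + modelSide κ uu uu
                (modelAngle κ uu L₀ (dist ((σ (inc w.2) uu : X)) y₀)) + (t₀ - uu) := by
              rw [step1, step3]
              exact add_le_add (add_le_add le_rfl step2) le_rfl
      -- limit of the c-function
      have hcw : Tendsto (fun w => dist ((σ (inc w.2) (min (T w) t₀) : X)) y₀) (𝓝 w₀)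
          (𝓝 (L₀ - t₀)) := by
        have hlow : ∀ w : unitInterval × ↥S,
            (dist q ((w.2:X)) - min (T w) t₀) - dist ((w.2:X)) y₀
              ≤ dist ((σ (inc w.2) (min (T w) t₀) : X)) y₀ := by
          intro w
          set uu := min (T w) t₀
          have huuLw : uu ∈ Set.Icc (0:ℝ) (dist q ((w.2:X))) :=
            ⟨le_min (hTmem w).1 hpos.le, le_trans (min_le_left _ _) (hTmem w).2⟩
          have hPy := hdy (inc w.2) uu huuLw
          have h1 := dist_triangle ((σ (inc w.2) uu : X)) y₀ ((w.2:X))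
          have h2 : dist y₀ ((w.2:X)) = dist ((w.2:X)) y₀ := dist_comm _ _
          have h3 : dist ((σ (inc w.2) uu : X)) ((inc w.2 : X)) = dist q ((w.2:X)) - uu := hPy
          linarith [h3]
        have hhigh : ∀ w : unitInterval × ↥S,
            dist ((σ (inc w.2) (min (T w) t₀) : X)) y₀
              ≤ (dist q ((w.2:X)) - min (T w) t₀) + dist ((w.2:X)) y₀ := by
          intro w
          set uu := min (T w) t₀
          have huuLw : uu ∈ Set.Icc (0:ℝ) (dist q ((w.2:X))) :=
            ⟨le_min (hTmem w).1 hpos.le, le_trans (min_le_left _ _) (hTmem w).2⟩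
          have hPy := hdy (inc w.2) uu huuLw
          have h1 := dist_triangle ((σ (inc w.2) uu : X)) ((w.2:X)) y₀
          have h3 : dist ((σ (inc w.2) uu : X)) ((inc w.2 : X)) = dist q ((w.2:X)) - uu := hPy
          linarith [h3]
        have hdyy : Tendsto (fun w : unitInterval × ↥S => dist ((w.2:X)) y₀) (𝓝 w₀) (𝓝 0) := by
          have h1 := hconty.dist (tendsto_const_nhds (x := y₀))
          rwa [dist_self] at h1
        have hlowlim : Tendsto (fun w : unitInterval × ↥S =>
            (dist q ((w.2:X)) - min (T w) t₀) - dist ((w.2:X)) y₀) (𝓝 w₀) (𝓝 (L₀ - t₀)) := by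
          have := (hcontL.sub huuT).sub hdyy
          simpa using this
        have hhighlim : Tendsto (fun w : unitInterval × ↥S =>
            (dist q ((w.2:X)) - min (T w) t₀) + dist ((w.2:X)) y₀) (𝓝 w₀) (𝓝 (L₀ - t₀)) := by
          have := (hcontL.sub huuT).add hdyy
          simpa using this
        exact tendsto_of_tendsto_of_tendsto_of_le_of_le hlowlim hhighlim hlow hhigh
      have hsm' : 0 < κ → Real.sqrt κ * t₀ < Real.pi ∧ Real.sqrt κ * L₀ < Real.pi := by
        intro hκpos
        have h4 := hκr hκpos
        have hs : (0:ℝ) ≤ Real.sqrt κ := Real.sqrt_nonneg κ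
        have h5 : L₀ < 3/2*r := hLb w₀.2
        have h6 : t₀ ≤ L₀ := (hTmem w₀).2
        constructor <;> nlinarith
      have hF := (continuousAt_modelF κ t₀ L₀ (L₀ - t₀) hpos hL₀pos hsm').tendsto
      have hgmap : Tendsto (fun w : unitInterval × ↥S => ((min (T w) t₀, L₀,
          dist ((σ (inc w.2) (min (T w) t₀) : X)) y₀) : ℝ × ℝ × ℝ)) (𝓝 w₀)
          (𝓝 ((t₀, L₀, L₀ - t₀) : ℝ × ℝ × ℝ)) :=
        huuT.prodMk_nhds ((tendsto_const_nhds (x := L₀)).prodMk_nhds hcw)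
      have hFcomp' := hF.comp hgmap
      simp only [Function.comp_def] at hFcomp'
      have hFcomp : Tendsto (fun w => modelSide κ (min (T w) t₀) (min (T w) t₀)
          (modelAngle κ (min (T w) t₀) L₀ (dist ((σ (inc w.2) (min (T w) t₀) : X)) y₀)))
          (𝓝 w₀) (𝓝 (modelSide κ t₀ t₀ (modelAngle κ t₀ L₀ (L₀ - t₀)))) := hFcomp'
      have hF0 : modelSide κ t₀ t₀ (modelAngle κ t₀ L₀ (L₀ - t₀)) = 0 := by
        rw [modelAngle_degenerate κ t₀ L₀ hpos (hTmem w₀).2 (fun hκpos => (hsm' hκpos).2)]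
        exact modelSide_self_zero κ t₀
      rw [hF0] at hFcomp
      apply squeeze_zero (fun w => dist_nonneg) hbound
      have hlim := ((hcontT.sub huuT).add hFcomp).add ((tendsto_const_nhds (x := t₀)).sub huuT)
      have hzero : (t₀ - t₀) + 0 + (t₀ - t₀) = 0 := by ring
      rwa [hzero] at hlim
  -- q belongs to the punctured ball
  have hq_mem : q ∈ S := by
    constructor
    · rw [Metric.mem_ball, hqx]; linarith
    · intro h1
      have : q = x := h1
      rw [this, dist_self] at hqx
      linarith
  -- build the contraction
  apply (contractible_iff_id_nullhomotopic ↥S).2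
  refine ⟨⟨q, hq_mem⟩, ⟨?_⟩⟩
  refine {
    toFun := fun w => ⟨H w, hKEY1 w.2 (T w) (hTmem w)⟩
    continuous_toFun := hHcont.subtype_mk _
    map_zero_left := ?_
    map_one_left := ?_ }
  · intro p
    apply Subtype.ext
    show (σ (inc p) ((1 - ((0 : unitInterval) : ℝ)) * dist q ((p:X))) : X) = (p : X)
    norm_num
    exact hσd' (inc p)
  · intro p
    apply Subtype.ext
    show (σ (inc p) ((1 - ((1 : unitInterval) : ℝ)) * dist q ((p:X))) : X) = q
    norm_num
    exact hσ0' (inc p)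







lemma isGeodesicOn_of_le {X : Type u} [MetricSpace X] {γ : ℝ → X} {a b : ℝ}
    (h : ∀ s ∈ Set.Icc a b, ∀ t ∈ Set.Icc a b, s ≤ t → dist (γ s) (γ t) = t - s) :
    IsGeodesicOn γ a b := by
  intro s hs t ht
  rcases le_total s t with hst | hst
  · rw [h s hs t ht hst, abs_of_nonpos (by linarith)]; ring
  · rw [dist_comm, h t ht s hs hst, abs_of_nonneg (by linarith)]

/-- The main one-sided extension lemma. -/
lemma extend_top {X : Type u} [MetricSpace X] {κ : ℝ}
    (hκ : CurvBoundedAbove κ X)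
    (h : ∀ x : X, ∀ δ > (0:ℝ), ∃ r : ℝ, 0 < r ∧ r < δ ∧
      ¬ ContractibleSpace ↥(Metric.ball x r \ {x}))
    (γ : ℝ → X) (a b : ℝ) (hab : a < b) (hγ : IsLocalGeodesicOn γ a b) :
    ∃ e > 0, ∃ γ' : ℝ → X, IsLocalGeodesicOn γ' a (b + e) ∧
      ∀ t ∈ Set.Icc a b, γ' t = γ t := by
  obtain ⟨U, hU, hUcomplete, hUgeo, hUcat⟩ := hκ (γ b)
  obtain ⟨ρ, hρpos, hρ⟩ := Metric.mem_nhds_iff.1 hU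
  obtain ⟨ε₀, hε₀pos, hgeo₀⟩ := hγ b ⟨hab.le, le_refl b⟩
  have hminb : min b (b + ε₀) = b := min_eq_left (by linarith)
  rw [hminb] at hgeo₀
  set ε₁ := min ε₀ (b - a) with hε₁def
  have hε₁pos : 0 < ε₁ := lt_min hε₀pos (by linarith)
  have hε₁a : ε₁ ≤ b - a := min_le_right _ _
  have hgeo₁ : IsGeodesicOn γ (b - ε₁) b :=
    hgeo₀.mono (max_le (by linarith [min_le_right ε₀ (b-a)]) (by linarith [min_le_left ε₀ (b-a)]))
      le_rfl
  have hπ := Real.pi_pos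
  set rb := min (min ε₁ ρ) (Real.pi / (10 * (Real.sqrt κ + 1))) with hrbdef
  have hsqnn : (0:ℝ) ≤ Real.sqrt κ := Real.sqrt_nonneg κ
  have hrbpos : 0 < rb := lt_min (lt_min hε₁pos hρpos) (by positivity)
  obtain ⟨r, hrpos, hrlt, hnc⟩ := h (γ b) rb hrbpos
  have hrε₁ : r < ε₁ := lt_of_lt_of_le hrlt (le_trans (min_le_left _ _) (min_le_left _ _))
  have hrρ : r < ρ := lt_of_lt_of_le hrlt (le_trans (min_le_left _ _) (min_le_right _ _))
  have hrκ : 0 < κ → Real.sqrt κ * r < Real.pi / 10 := by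
    intro hκpos
    have hs : 0 < Real.sqrt κ := Real.sqrt_pos.2 hκpos
    have h1 : r < Real.pi / (10 * (Real.sqrt κ + 1)) := lt_of_lt_of_le hrlt (min_le_right _ _)
    rw [lt_div_iff₀ (by positivity)] at h1
    nlinarith
  have hq_dist : dist (γ (b - r/2)) (γ b) = r/2 := by
    have h1 := hgeo₁ (b - r/2) ⟨by linarith, by linarith⟩ b ⟨by linarith, le_rfl⟩
    rw [h1, abs_of_nonpos (by linarith)]
    ring
  have hUball : Metric.ball (γ b) r ⊆ U :=
    subset_trans (Metric.ball_subset_ball hrρ.le) hρ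
  have hqU : γ (b - r/2) ∈ U := hUball (by rw [Metric.mem_ball, hq_dist]; linarith)
  by_cases hy : ∃ y ∈ Metric.ball (γ b) r \ {γ b}, dist (γ (b - r/2)) y = r/2 + dist (γ b) y
  · obtain ⟨y, hyS, hyeq⟩ := hy
    have hyU : y ∈ U := hUball hyS.1
    have hxU' : γ b ∈ U := hUball (Metric.mem_ball_self hrpos)
    obtain ⟨η, hη0, hηe, hηg⟩ := hUgeo ⟨γ b, hxU'⟩ ⟨y, hyU⟩
    set e := dist (γ b) y with hedef
    have hde : dist (⟨γ b, hxU'⟩ : ↥U) (⟨y, hyU⟩ : ↥U) = e := Subtype.dist_eq _ _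
    have hepos : 0 < e := by
      rw [hedef, dist_pos]
      intro h1
      exact hyS.2 (by rw [← h1]; rfl)
    set η' : ℝ → X := fun t => ((η t : X)) with hη'def
    have hη'0 : η' 0 = γ b := congrArg Subtype.val hη0
    have hη'e : η' e = y := by
      have := congrArg Subtype.val hηe
      rwa [hde] at this
    have hη'g : ∀ s ∈ Set.Icc (0:ℝ) e, ∀ t ∈ Set.Icc (0:ℝ) e, dist (η' s) (η' t) = |s - t| := by
      intro s hs t ht
      rw [hη'def]
      simp only []
      rw [← Subtype.dist_eq]
      exact hηg s (by rwa [hde]) t (by rwa [hde])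
    set γ' : ℝ → X := fun t => if t ≤ b then γ t else η' (t - b) with hγ'def
    have hagree : ∀ t ∈ Set.Icc a b, γ' t = γ t := fun t ht => if_pos ht.2
    -- the concatenated geodesic near b
    have hbig : IsGeodesicOn γ' (b - r/2) (b + e) := by
      apply isGeodesicOn_of_le
      intro s hs t ht hst
      by_cases hsb : s ≤ b
      · by_cases htb : t ≤ b
        · rw [hγ'def]
          simp only [if_pos hsb, if_pos htb]
          have h1 := hgeo₁ s ⟨by linarith [hs.1], hsb⟩ t ⟨by linarith [ht.1], htb⟩
          rw [h1, abs_of_nonpos (by linarith)]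
          ring
        · push_neg at htb
          rw [hγ'def]
          simp only [if_pos hsb, if_neg (not_le.2 htb)]
          set τ := t - b with hτdef
          have hτ0 : 0 ≤ τ := by linarith
          have hτe : τ ≤ e := by linarith [ht.2]
          have hup : dist (γ s) (η' τ) ≤ t - s := by
            have h1 := dist_triangle (γ s) (γ b) (η' τ)
            have h2 : dist (γ s) (γ b) = b - s := by
              have h3 := hgeo₁ s ⟨by linarith [hs.1], hsb⟩ b ⟨by linarith, le_rfl⟩
              rw [h3, abs_of_nonpos (by linarith)]; ring
            have h4 : dist (γ b) (η' τ) = τ := by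
              have h5 := hη'g 0 ⟨le_rfl, hepos.le⟩ τ ⟨hτ0, hτe⟩
              rw [hη'0] at h5
              rw [h5, zero_sub, abs_neg, abs_of_nonneg hτ0]
            rw [h2, h4] at h1
            linarith
          have hlow : t - s ≤ dist (γ s) (η' τ) := by
            have h1 := dist_triangle (γ (b - r/2)) (γ s) (η' τ)
            have h2 : dist (γ (b - r/2)) (γ s) = s - (b - r/2) := by
              have h3 := hgeo₁ (b - r/2) ⟨by linarith, by linarith⟩ s ⟨by linarith [hs.1], hsb⟩
              rw [h3, abs_of_nonpos (by linarith [hs.1])]; ring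
            have h4 : dist (γ (b - r/2)) (η' τ) ≥ r/2 + τ := by
              have h5 := dist_triangle (γ (b - r/2)) (η' τ) y
              have h6 : dist (η' τ) y = e - τ := by
                have h7 := hη'g τ ⟨hτ0, hτe⟩ e ⟨hepos.le, le_rfl⟩
                rw [hη'e] at h7
                rw [h7, abs_of_nonpos (by linarith)]; ring
              rw [h6, hyeq] at h5
              linarith
            linarith
          linarith
      · push_neg at hsb
        have htb : ¬ (t ≤ b) := by push_neg; linarith
        rw [hγ'def]
        simp only [if_neg (not_le.2 hsb), if_neg htb]
        have h1 := hη'g (s - b) ⟨by linarith, by linarith [hs.2]⟩ (t - b)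
          ⟨by linarith, by linarith [ht.2]⟩
        rw [h1, abs_of_nonpos (by linarith)]
        ring
    refine ⟨e, hepos, γ', ?_, hagree⟩
    intro t ht
    by_cases hcase : t ≤ b - r/4
    · obtain ⟨ε', hε'pos, hg'⟩ := hγ t ⟨ht.1, by linarith⟩
      set ε'' := min ε' (r/8) with hε''def
      have hε''pos : 0 < ε'' := lt_min hε'pos (by linarith)
      refine ⟨ε'', hε''pos, ?_⟩
      have hmin : min (b + e) (t + ε'') = t + ε'' :=
        min_eq_right (by linarith [min_le_right ε' (r/8)])
      rw [hmin]
      have hsub : IsGeodesicOn γ (max a (t - ε'')) (t + ε'') := by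
        apply hg'.mono
        · exact max_le_max le_rfl (by linarith [min_le_left ε' (r/8)])
        · exact le_min (by linarith [min_le_right ε' (r/8)]) (by linarith [min_le_left ε' (r/8)])
      apply hsub.congr
      intro u hu
      exact if_pos (by linarith [hu.2, min_le_right ε' (r/8)])
    · push_neg at hcase
      refine ⟨r/8, by linarith, ?_⟩
      apply hbig.mono
      · exact le_trans (by linarith) (le_max_right a (t - r/8))
      · exact min_le_left _ _
  · exfalso
    apply hnc
    apply contraction_of_strict hUgeo hUcat hrpos hrκ hUball hqU hq_dist
    intro y hyS
    have h1 : dist (γ (b - r/2)) y ≤ r/2 + dist (γ b) y := by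
      have h2 := dist_triangle (γ (b - r/2)) (γ b) y
      rw [hq_dist] at h2
      exact h2
    rcases lt_or_eq_of_le h1 with h2 | h2
    · exact h2
    · exact absurd ⟨y, hyS, h2⟩ hy


end BusemannAux

set_option maxHeartbeats 1000000 in
/-- **Lemma 2.2 (Busemann).** Let `X` be a metric space with an upper curvature bound.  If for
every `x ∈ X` there exist arbitrarily small `r > 0` such that the punctured ball
`B_r(x) \ {x}` is non-contractible, then `X` is locally geodesically complete. -/
theorem busemann_geodesic_completeness (X : Type u) [MetricSpace X]
    (hX : HasUpperCurvatureBound X)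
    (h : ∀ x : X, ∀ δ > (0:ℝ), ∃ r : ℝ, 0 < r ∧ r < δ ∧
      ¬ ContractibleSpace ↥(Metric.ball x r \ {x})) :
    LocallyGeodesicallyComplete X := by
  obtain ⟨κ, hκ⟩ := hX
  intro γ a b hab hγ
  obtain ⟨e₁, he₁, γ₁, hγ₁, hagree₁⟩ := extend_top hκ h γ a b hab hγ
  have hrefl₁ := hγ₁.reflect
  obtain ⟨e₂, he₂, δ', hδ', hagree₂⟩ := extend_top hκ h _ a (b + e₁) (by linarith) hrefl₁
  have hrefl₂ := hδ'.reflect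
  have hshift := hrefl₂.shift (c := e₂)
  refine ⟨min e₁ e₂, lt_min he₁ he₂, fun t => δ' (a + (b + e₁ + e₂) - (t + e₂)), ?_, ?_⟩
  · apply hshift.mono
    · simp only [sub_le_sub_iff_left]
      exact min_le_right e₁ e₂
    · have h1 : b + e₁ + e₂ - e₂ = b + e₁ := by ring
      rw [h1]
      linarith [min_le_left e₁ e₂]
  · intro t ht
    have h1 : a + (b + e₁ + e₂) - (t + e₂) ∈ Set.Icc a (b + e₁) := by
      constructor <;> [linarith [ht.2]; linarith [ht.1]]
    show δ' (a + (b + e₁ + e₂) - (t + e₂)) = γ t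
    rw [hagree₂ _ h1]
    have h2 : a + (b + e₁) - (a + (b + e₁ + e₂) - (t + e₂)) = t := by ring
    rw [h2]
    exact hagree₁ t ht


end
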